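/- arXiv:1610.03408 — 2 statements merged into one kernel-verified Lean document; each statement's English description precedes it below -/
import Mathlib

section
/- Let a1 > 0, a2 > 0 and let θ_1, …, θ_k be distributed according to the multiplicative inverse gamma prior with parameters (a1, a2). Then for every m with 0 < m < a1 and 0 < m < a2, and every h ∈ {1, …, k}, the m-th moment is E(θ_h^m) = (Γ(a1 − m)/Γ(a1)) · (Γ(a2 − m)/Γ(a2))^{h−1}. -/
open MeasureTheory ProbabilityTheory Real Filter Set
open scoped NNReal ENNReal

/-- Density of the inverse gamma distribution `Inv-Ga(a, b)`: equal to
`b^a / Γ(a) · x^{-(a+1)} · e^{-b/x}` for `x > 0` and `0` otherwise. -/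
noncomputable def invGammaPDF (a b : ℝ) (x : ℝ) : ℝ :=
  if 0 < x then b ^ a / Real.Gamma a * x ^ (-(a + 1)) * Real.exp (-b / x) else 0

/-- The inverse gamma distribution `Inv-Ga(a, b)` as a measure on `ℝ`. -/
noncomputable def invGammaMeasure (a b : ℝ) : Measure ℝ :=
  MeasureTheory.volume.withDensity (fun x => ENNReal.ofReal (invGammaPDF a b x))

lemma invGammaPDF_nonneg (a b x : ℝ) (ha : 0 < a) (hb : 0 < b) : 0 ≤ invGammaPDF a b x := by
  unfold invGammaPDF
  split_ifs with hx
  · positivity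
  · exact le_refl _

lemma measurable_invGammaPDF (a b : ℝ) : Measurable (invGammaPDF a b) := by
  unfold invGammaPDF
  have : MeasurableSet {x : ℝ | 0 < x} := measurableSet_Ioi
  refine Measurable.ite this ?_ measurable_const
  fun_prop


lemma invGamma_core (a m : ℝ) (ha : 0 < a) (hm0 : 0 < m) (hma : m < a) :
    IntegrableOn (fun x : ℝ => invGammaPDF a 1 x * x ^ m) (Ioi 0) ∧
    ∫ x in Ioi 0, invGammaPDF a 1 x * x ^ m = Real.Gamma (a - m) / Real.Gamma a := by
  have hGa : 0 < Real.Gamma a := Real.Gamma_pos_of_pos ha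
  set g : ℝ → ℝ := fun y => (Real.Gamma a)⁻¹ * (Real.exp (-y) * y ^ (a - m - 1)) with hg
  have hgint : IntegrableOn g (Ioi 0) := by
    exact (Real.GammaIntegral_convergent (by linarith : (0:ℝ) < a - m)).const_mul _
  have hgval : ∫ y in Ioi 0, g y = (Real.Gamma a)⁻¹ * Real.Gamma (a - m) := by
    rw [MeasureTheory.integral_const_mul, ← Real.Gamma_eq_integral (by linarith : (0:ℝ) < a - m)]
  have hcongr : ∀ x ∈ Ioi (0:ℝ),
      (|(-1:ℝ)| * x ^ ((-1:ℝ) - 1)) • g (x ^ (-1:ℝ)) = invGammaPDF a 1 x * x ^ m := by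
    intro x hx
    have hx0 : 0 < x := hx
    have hxne : x ≠ 0 := ne_of_gt hx0
    rw [invGammaPDF, if_pos hx0, Real.one_rpow]
    have hinvpos : 0 < x⁻¹ := inv_pos.mpr hx0
    rw [hg]
    simp only [smul_eq_mul, abs_neg, abs_one, one_mul]
    have e1 : (x ^ (-1:ℝ)) ^ (a-m-1) = x ^ ((-1)*(a-m-1)) := (Real.rpow_mul hx0.le _ _).symm
    have e2 : x ^ ((-1:ℝ)-1) * x ^ ((-1:ℝ)*(a-m-1)) = x ^ (-(a+1)) * x ^ m := by
      rw [← Real.rpow_add hx0, ← Real.rpow_add hx0]; ring_nf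
    rw [e1, Real.rpow_neg_one, one_div,
      show (-1:ℝ)/x = -x⁻¹ by rw [neg_div, one_div]]
    linear_combination (Real.exp (-x⁻¹) * (Real.Gamma a)⁻¹) * e2
  constructor
  · exact ((integrableOn_Ioi_comp_rpow_iff g (by norm_num : (-1:ℝ) ≠ 0)).mpr hgint).congr_fun
      hcongr measurableSet_Ioi
  · calc ∫ x in Ioi 0, invGammaPDF a 1 x * x ^ m
        = ∫ x in Ioi 0, (|(-1:ℝ)| * x ^ ((-1:ℝ)-1)) • g (x ^ (-1:ℝ)) :=
          (setIntegral_congr_fun measurableSet_Ioi hcongr).symm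
      _ = ∫ y in Ioi 0, g y := integral_comp_rpow_Ioi g (by norm_num)
      _ = Real.Gamma (a-m) / Real.Gamma a := by rw [hgval]; field_simp


lemma invGamma_moment (a m : ℝ) (ha : 0 < a) (hm0 : 0 < m) (hma : m < a) :
    Integrable (fun x : ℝ => x ^ m) (invGammaMeasure a 1) ∧
    ∫ x, x ^ m ∂(invGammaMeasure a 1) = Real.Gamma (a - m) / Real.Gamma a := by
  obtain ⟨hcoreInt, hcoreVal⟩ := invGamma_core a m ha hm0 hma
  set f : ℝ → ℝ≥0 := fun x => (invGammaPDF a 1 x).toNNReal with hf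
  have hfmeas : Measurable f := (measurable_invGammaPDF a 1).real_toNNReal
  have hμ : invGammaMeasure a 1 = MeasureTheory.volume.withDensity (fun x => (f x : ℝ≥0∞)) := rfl
  have hsmul : ∀ x : ℝ, f x • x ^ m = invGammaPDF a 1 x * x ^ m := by
    intro x
    rw [NNReal.smul_def, smul_eq_mul, hf,
      Real.coe_toNNReal _ (invGammaPDF_nonneg a 1 x ha one_pos)]
  have hsupp : Function.support (fun x : ℝ => invGammaPDF a 1 x * x ^ m) ⊆ Ioi 0 := by
    intro x hx
    by_contra hx0
    apply hx
    show invGammaPDF a 1 x * x ^ m = 0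
    rw [invGammaPDF, if_neg (fun h : 0 < x => hx0 h), zero_mul]
  have hint : Integrable (fun x : ℝ => invGammaPDF a 1 x * x ^ m) :=
    (integrableOn_iff_integrable_of_support_subset hsupp).mp hcoreInt
  constructor
  · rw [hμ, integrable_withDensity_iff_integrable_smul hfmeas]
    exact hint.congr (Filter.Eventually.of_forall fun x => (hsmul x).symm)
  · rw [hμ, integral_withDensity_eq_integral_smul hfmeas]
    simp_rw [hsmul]
    rw [← setIntegral_eq_integral_of_forall_compl_eq_zero
      (fun x hx => Function.notMem_support.mp (fun hs => hx (hsupp hs)))]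
    exact hcoreVal

lemma ae_pos_of_invGamma_law {Ω : Type*} [MeasureSpace Ω]
    (X : Ω → ℝ) (hX : Measurable X) {a : ℝ}
    (hlaw : Measure.map X ℙ = invGammaMeasure a 1) : ∀ᵐ ω ∂(ℙ : Measure Ω), 0 < X ω := by
  rw [ae_iff]
  have hset : {ω | ¬ 0 < X ω} = X ⁻¹' (Iic 0) := by ext ω; simp [not_lt]
  rw [hset, ← Measure.map_apply hX measurableSet_Iic, hlaw]
  show (MeasureTheory.volume.withDensity
    (fun x => ENNReal.ofReal (invGammaPDF a 1 x))) (Iic 0) = 0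
  rw [withDensity_apply _ measurableSet_Iic]
  have : ∀ᵐ x ∂(volume.restrict (Iic 0)), ENNReal.ofReal (invGammaPDF a 1 x) = 0 := by
    refine (ae_restrict_iff' measurableSet_Iic).mpr (ae_of_all _ fun x hx => ?_)
    rw [invGammaPDF, if_neg (not_lt.mpr hx), ENNReal.ofReal_zero]
  rw [lintegral_congr_ae this]
  simp

lemma indep_prod_integral {Ω : Type*} [MeasureSpace Ω] [IsProbabilityMeasure (ℙ : Measure Ω)]
    (g : ℕ → Ω → ℝ)
    (hindep : iIndepFun g ℙ)
    (hmeas : ∀ l, Measurable (g l)) (hint : ∀ l, Integrable (g l) ℙ) :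
    ∀ n : ℕ, Integrable (∏ l ∈ Finset.range n, g l) ℙ ∧
      ∫ ω, (∏ l ∈ Finset.range n, g l) ω ∂ℙ = ∏ l ∈ Finset.range n, ∫ ω, g l ω ∂ℙ := by
  intro n
  induction n with
  | zero =>
    constructor
    · rw [Finset.prod_range_zero]; exact integrable_const (1:ℝ)
    · simp
  | succ n ih =>
    obtain ⟨ihInt, ihVal⟩ := ih
    have hIndep : IndepFun (∏ l ∈ Finset.range n, g l) (g n) ℙ :=
      hindep.indepFun_prod_range_succ hmeas n
    have hIntMul : Integrable ((∏ l ∈ Finset.range n, g l) * g n) ℙ :=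
      hIndep.integrable_mul ihInt (hint n)
    constructor
    · rwa [Finset.prod_range_succ]
    · rw [Finset.prod_range_succ, Finset.prod_range_succ, ← ihVal]
      have h2 := hIndep.integral_mul_eq_mul_integral ihInt.aestronglyMeasurable (hint n).aestronglyMeasurable
      calc ∫ ω, (∏ l ∈ Finset.range n, g l) ω * g n ω ∂ℙ
          = ∫ ω, ((∏ l ∈ Finset.range n, g l) * g n) ω ∂ℙ := rfl
        _ = (∫ ω, (∏ l ∈ Finset.range n, g l) ω ∂ℙ) * ∫ ω, g n ω ∂ℙ := h2

lemma moment_of_invGamma_law {Ω : Type*} [MeasureSpace Ω]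
    (X : Ω → ℝ) (hX : Measurable X) {a m : ℝ} (ha : 0 < a) (hm0 : 0 < m) (hma : m < a)
    (hlaw : Measure.map X ℙ = invGammaMeasure a 1) :
    Integrable (fun ω => X ω ^ m) (ℙ : Measure Ω) ∧
    ∫ ω, X ω ^ m ∂(ℙ : Measure Ω) = Real.Gamma (a - m) / Real.Gamma a := by
  have hrpow : Measurable fun x : ℝ => x ^ m := by fun_prop
  obtain ⟨hint, hval⟩ := invGamma_moment a m ha hm0 hma
  rw [← hlaw] at hint hval
  constructor
  · exact (integrable_map_measure hrpow.aestronglyMeasurable hX.aemeasurable).mp hint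
  · rw [← hval, integral_map hX.aemeasurable hrpow.aestronglyMeasurable]
/-- `m`-th moments of the multiplicative inverse gamma prior:
`E(θ_h^m) = (Γ(a1-m)/Γ(a1)) · (Γ(a2-m)/Γ(a2))^{h-1}` for `0 < m < min(a1, a2)`. -/
theorem multiplicative_inverse_gamma_moment
    {Ω : Type*} [MeasureSpace Ω] [IsProbabilityMeasure (ℙ : Measure Ω)]
    (a1 a2 : ℝ) (ha1 : 0 < a1) (ha2 : 0 < a2)
    (k : ℕ) (ϑ : ℕ → Ω → ℝ)
    (hmeas : ∀ l, Measurable (ϑ l))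
    (hindep : iIndepFun ϑ ℙ)
    (hlaw1 : Measure.map (ϑ 0) ℙ = invGammaMeasure a1 1)
    (hlaw2 : ∀ l, 1 ≤ l → Measure.map (ϑ l) ℙ = invGammaMeasure a2 1)
    (m : ℝ) (hm0 : 0 < m) (hma1 : m < a1) (hma2 : m < a2) :
    ∀ h, 1 ≤ h → h ≤ k →
      ∫ ω, (∏ l ∈ Finset.range h, ϑ l ω) ^ m ∂ℙ =
        Real.Gamma (a1 - m) / Real.Gamma a1 *
          (Real.Gamma (a2 - m) / Real.Gamma a2) ^ (h - 1) := by
  intro h h1 _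
  obtain ⟨n, rfl⟩ : ∃ n, h = n + 1 := ⟨h - 1, (Nat.succ_pred_eq_of_pos h1).symm⟩
  have hrpow : Measurable fun x : ℝ => x ^ m := by fun_prop
  set g : ℕ → Ω → ℝ := fun l ω => ϑ l ω ^ m with hgdef
  have hgmeas : ∀ l, Measurable (g l) := fun l => hrpow.comp (hmeas l)
  have hgindep : iIndepFun g ℙ :=
    hindep.comp (fun _ => fun x : ℝ => x ^ m) (fun _ => hrpow)
  have hmom : ∀ l : ℕ, Integrable (g l) ℙ ∧
      ∫ ω, g l ω ∂ℙ = if l = 0 then Real.Gamma (a1 - m) / Real.Gamma a1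
        else Real.Gamma (a2 - m) / Real.Gamma a2 := by
    intro l
    rcases Nat.eq_zero_or_pos l with rfl | hl
    · simpa using moment_of_invGamma_law (ϑ 0) (hmeas 0) ha1 hm0 hma1 hlaw1
    · have := moment_of_invGamma_law (ϑ l) (hmeas l) ha2 hm0 hma2 (hlaw2 l hl)
      simpa [Nat.pos_iff_ne_zero.mp hl] using this
  have hgint : ∀ l, Integrable (g l) ℙ := fun l => (hmom l).1
  -- a.e. positivity
  have hpos : ∀ᵐ ω ∂(ℙ : Measure Ω), ∀ l, 0 < ϑ l ω := by
    rw [ae_all_iff]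
    intro l
    rcases Nat.eq_zero_or_pos l with rfl | hl
    · exact ae_pos_of_invGamma_law (ϑ 0) (hmeas 0) hlaw1
    · exact ae_pos_of_invGamma_law (ϑ l) (hmeas l) (hlaw2 l hl)
  have hcongr : ∀ᵐ ω ∂(ℙ : Measure Ω),
      (∏ l ∈ Finset.range (n+1), ϑ l ω) ^ m = (∏ l ∈ Finset.range (n+1), g l) ω := by
    filter_upwards [hpos] with ω hω
    rw [Finset.prod_apply]
    exact (Real.finset_prod_rpow _ _ (fun i _ => (hω i).le) m).symm
  rw [integral_congr_ae hcongr]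
  obtain ⟨-, hval⟩ := indep_prod_integral g hgindep hgmeas hgint (n+1)
  rw [hval, Finset.prod_range_succ']
  have h0 : ∫ ω, g 0 ω ∂ℙ = Real.Gamma (a1 - m) / Real.Gamma a1 := by simpa using (hmom 0).2
  have hsucc : ∀ i : ℕ, ∫ ω, g (i+1) ω ∂ℙ = Real.Gamma (a2 - m) / Real.Gamma a2 := by
    intro i; simpa using (hmom (i+1)).2
  rw [h0, Finset.prod_congr rfl (fun i _ => hsucc i), Finset.prod_const, Finset.card_range]
  simp [mul_comm]
end

section
/- Let a > 0 and c > 0, and let ϑ and ϑ' be independent real random variables each with law Inv-Ga(a, 1). Then the law of the product c·ϑ·ϑ' has density on (0, ∞) given by θ ↦ (c^a / Γ(a)²) · θ^{−a−1} · ∫_0^∞ x^{−1} · e^{−c/x − x/θ} dx; that is, for every θ > 0, P(c·ϑ·ϑ' ≤ θ) = ∫_0^θ (c^a / Γ(a)²) · t^{−a−1} · (∫_0^∞ x^{−1} e^{−c/x − x/t} dx) dt. -/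
open MeasureTheory ProbabilityTheory Real Filter Set

open scoped ENNReal

section aux

lemma lintegral_scale (g : ℝ → ℝ≥0∞) (hg : Measurable g) {k : ℝ} (hk : 0 < k)
    {s : Set ℝ} (hs : MeasurableSet s) :
    ∫⁻ y in s, g y = ENNReal.ofReal k * ∫⁻ t in (fun t => k * t) ⁻¹' s, g (k * t) := by
  have hT : Measurable (fun t : ℝ => k * t) := measurable_const_mul k
  have hmap : Measure.map (fun t : ℝ => k * t) volume = ENNReal.ofReal |k⁻¹| • volume :=
    Real.map_volume_mul_left hk.ne'
  have h1 : ∫⁻ t in (fun t => k * t) ⁻¹' s, g (k * t) ∂volume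
      = ∫⁻ y, g y ∂((Measure.map (fun t : ℝ => k * t) volume).restrict s) := by
    rw [Measure.restrict_map hT hs, lintegral_map hg hT]
  rw [h1, hmap, Measure.restrict_smul, lintegral_smul_measure, smul_eq_mul, ← mul_assoc,
    abs_of_pos (inv_pos.mpr hk), ← ENNReal.ofReal_mul hk.le, mul_inv_cancel₀ hk.ne',
    ENNReal.ofReal_one, one_mul]

lemma inner_bound {c x : ℝ} (hc : 0 < c) (hx : 0 < x) (h1 : x ≤ 1) :
    x⁻¹ * Real.exp (-c / x) ≤ 4 / c ^ 2 := by
  have hy : 0 < c / x := div_pos hc hx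
  have h2 : c / x / 2 ≤ Real.exp (c / x / 2) :=
    le_trans (by linarith) (Real.add_one_le_exp _)
  have h3 : (c / x / 2) ^ 2 ≤ Real.exp (c / x) := by
    calc (c / x / 2) ^ 2 ≤ Real.exp (c / x / 2) ^ 2 := by
          apply pow_le_pow_left₀ (by positivity) h2
      _ = Real.exp (c / x) := by
          rw [← Real.exp_nat_mul]; norm_num; ring_nf
  have h4 : Real.exp (-c / x) ≤ 4 * x ^ 2 / c ^ 2 := by
    rw [neg_div, Real.exp_neg]
    rw [inv_le_iff_one_le_mul₀ (Real.exp_pos _)]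
    calc (1:ℝ) = (4 * x^2 / c^2) * ((c/x/2)^2) := by
          field_simp; ring
      _ ≤ (4 * x^2 / c^2) * Real.exp (c/x) := by
          apply mul_le_mul_of_nonneg_left h3 (by positivity)
  calc x⁻¹ * Real.exp (-c / x) ≤ x⁻¹ * (4 * x ^ 2 / c ^ 2) := by
        apply mul_le_mul_of_nonneg_left h4 (by positivity)
    _ = 4 * x / c ^ 2 := by field_simp
    _ ≤ 4 / c ^ 2 := by
        gcongr
        linarith

lemma integrable_inner (c t : ℝ) (hc : 0 < c) (ht : 0 < t) :
    IntegrableOn (fun x => x⁻¹ * Real.exp (-c / x - x / t)) (Ioi (0:ℝ)) := by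
  have hmeas : AEStronglyMeasurable (fun x : ℝ => x⁻¹ * Real.exp (-c / x - x / t))
      (volume.restrict (Ioi 0)) := by
    apply Measurable.aestronglyMeasurable
    fun_prop
  set C : ℝ := max 1 (4 / c ^ 2) with hC
  have hint : IntegrableOn (fun x => C * Real.exp (-(t⁻¹) * x)) (Ioi (0:ℝ)) :=
    ((exp_neg_integrableOn_Ioi 0 (inv_pos.mpr ht)).const_mul C)
  refine Integrable.mono' hint hmeas ?_
  filter_upwards [ae_restrict_mem measurableSet_Ioi] with x hx
  have hx0 : 0 < x := hx
  rw [Real.norm_eq_abs, abs_of_nonneg (by positivity)]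
  have hsplit : Real.exp (-c / x - x / t) = Real.exp (-c/x) * Real.exp (-x/t) := by
    rw [← Real.exp_add]; ring_nf
  rw [hsplit, ← mul_assoc]
  have hxt : Real.exp (-x / t) = Real.exp (-(t⁻¹) * x) := by ring_nf
  rw [hxt]
  have key : x⁻¹ * Real.exp (-c / x) ≤ C := by
    rcases le_or_gt x 1 with h1 | h1
    · exact le_trans (inner_bound hc hx0 h1) (le_max_right _ _)
    · have hinv : x⁻¹ ≤ 1 := by
        rw [inv_le_one_iff₀]; right; exact h1.le
      calc x⁻¹ * Real.exp (-c/x) ≤ 1 * 1 := by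
            apply mul_le_mul hinv (Real.exp_le_one_iff.mpr ?_) (Real.exp_nonneg _) one_pos.le
            · rw [neg_div]; simp [div_nonneg hc.le hx0.le]
          _ ≤ C := by rw [one_mul]; exact le_max_left _ _
  exact mul_le_mul_of_nonneg_right key (Real.exp_nonneg _)

lemma invGammaPDF_measurable (a : ℝ) : Measurable (invGammaPDF a 1) := by
  unfold invGammaPDF
  apply Measurable.ite (measurableSet_lt measurable_const measurable_id)
  · fun_prop
  · fun_prop

lemma invGammaPDF_nonneg_s11 (a : ℝ) (hΓ : 0 < Real.Gamma a) (x : ℝ) : 0 ≤ invGammaPDF a 1 x := by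
  unfold invGammaPDF
  split_ifs with h
  · have h1 : (0:ℝ) ≤ (1:ℝ) ^ a := Real.rpow_nonneg zero_le_one a
    have h2 : (0:ℝ) ≤ x ^ (-(a+1)) := Real.rpow_nonneg h.le _
    positivity
  · exact le_refl 0

lemma invGammaPDF_of_nonpos (a b : ℝ) {x : ℝ} (hx : ¬ 0 < x) : invGammaPDF a b x = 0 := by
  unfold invGammaPDF; rw [if_neg hx]

lemma invGammaPDF_of_pos (a : ℝ) {x : ℝ} (hx : 0 < x) :
    invGammaPDF a 1 x = 1 / Real.Gamma a * x ^ (-(a+1)) * Real.exp (-1 / x) := by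
  unfold invGammaPDF; rw [if_pos hx, Real.one_rpow]

lemma density_algebra {a c t x : ℝ} (hc : 0 < c) (ht : 0 < t) (hx : 0 < x)
    (hΓ : 0 < Real.Gamma a) :
    invGammaPDF a 1 x * (c * x)⁻¹ * invGammaPDF a 1 ((c * x)⁻¹ * t)
      = c ^ a / Real.Gamma a ^ 2 * t ^ (-a - 1) * (x⁻¹ * Real.exp (-1 / x - c * x / t)) := by
  have hcx : 0 < c * x := mul_pos hc hx
  have hct : 0 < (c * x)⁻¹ * t := mul_pos (inv_pos.mpr hcx) ht
  rw [invGammaPDF_of_pos a hx, invGammaPDF_of_pos a hct]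
  have hexp : -1 / ((c * x)⁻¹ * t) = -(c * x) / t := by
    field_simp
  rw [hexp]
  have hrpow : x ^ (-(a+1)) * ((c * x)⁻¹ * ((c * x)⁻¹ * t) ^ (-(a+1)))
      = c ^ a * t ^ (-a - 1) * x⁻¹ := by
    rw [Real.mul_rpow (inv_nonneg.mpr hcx.le) ht.le,
      Real.inv_rpow hcx.le, ← Real.rpow_neg_one (c*x),
      ← Real.rpow_neg hcx.le, neg_neg]
    rw [show (c*x) ^ (-1:ℝ) * ((c*x) ^ (a+1) * t ^ (-(a+1)))
        = ((c*x) ^ (-1:ℝ) * (c*x) ^ (a+1)) * t ^ (-(a+1)) by ring,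
      ← Real.rpow_add hcx]
    norm_num
    rw [Real.mul_rpow hc.le hx.le]
    rw [show x ^ (-1 + -a) * (c ^ a * x ^ a * t ^ (-1 + -a))
        = c ^ a * (x ^ (-1 + -a) * x ^ a) * t ^ (-1 + -a) by ring,
      ← Real.rpow_add hx]
    rw [show -1 + -a + a = (-1:ℝ) by ring, Real.rpow_neg_one,
      show (-1 + -a : ℝ) = -a-1 by ring]
    ring
  have hexp2 : Real.exp (-1 / x) * Real.exp (-(c * x) / t) = Real.exp (-1/x - c*x/t) := by
    rw [← Real.exp_add]; ring_nf
  calc 1 / Real.Gamma a * x ^ (-(a+1)) * Real.exp (-1 / x) * (c * x)⁻¹ *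
        (1 / Real.Gamma a * ((c * x)⁻¹ * t) ^ (-(a+1)) * Real.exp (-(c * x) / t))
      = (1 / Real.Gamma a * (1 / Real.Gamma a)) *
          (x ^ (-(a+1)) * ((c * x)⁻¹ * ((c * x)⁻¹ * t) ^ (-(a+1)))) *
          (Real.exp (-1 / x) * Real.exp (-(c * x) / t)) := by ring
    _ = c ^ a / Real.Gamma a ^ 2 * t ^ (-a - 1) * (x⁻¹ * Real.exp (-1/x - c*x/t)) := by
        rw [hrpow, hexp2]; ring

end aux

lemma inner_eval (a c t : ℝ) (hc : 0 < c) (ht : 0 < t) (hΓ : 0 < Real.Gamma a) :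
    ∫⁻ x in Ioi (0:ℝ), ENNReal.ofReal (invGammaPDF a 1 x) * ENNReal.ofReal ((c * x)⁻¹) *
        ENNReal.ofReal (invGammaPDF a 1 ((c * x)⁻¹ * t))
      = ENNReal.ofReal (c ^ a / Real.Gamma a ^ 2 * t ^ (-a - 1) *
          ∫ x in Ioi (0:ℝ), x⁻¹ * Real.exp (-c / x - x / t)) := by
  have hK : 0 ≤ c ^ a / Real.Gamma a ^ 2 * t ^ (-a - 1) := by
    have h1 : (0:ℝ) ≤ c ^ a := Real.rpow_nonneg hc.le a
    have h2 : (0:ℝ) ≤ t ^ (-a - 1) := Real.rpow_nonneg ht.le _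
    positivity
  -- step A : pointwise identity on Ioi 0
  have hA : ∫⁻ x in Ioi (0:ℝ), ENNReal.ofReal (invGammaPDF a 1 x) * ENNReal.ofReal ((c * x)⁻¹) *
        ENNReal.ofReal (invGammaPDF a 1 ((c * x)⁻¹ * t))
      = ∫⁻ x in Ioi (0:ℝ), ENNReal.ofReal (c ^ a / Real.Gamma a ^ 2 * t ^ (-a - 1)) *
          ENNReal.ofReal (x⁻¹ * Real.exp (-1 / x - c * x / t)) := by
    apply setLIntegral_congr_fun measurableSet_Ioi
    intro x hx
    dsimp only
    rw [← ENNReal.ofReal_mul (invGammaPDF_nonneg_s11 a hΓ x),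
      ← ENNReal.ofReal_mul (mul_nonneg (invGammaPDF_nonneg_s11 a hΓ x)
        (inv_nonneg.mpr (mul_pos hc hx).le)),
      density_algebra hc ht hx hΓ,
      ENNReal.ofReal_mul hK]
  rw [hA, lintegral_const_mul _ (by fun_prop)]
  -- step C : substitution x ↦ c * x
  have hC : ∫⁻ x in Ioi (0:ℝ), ENNReal.ofReal (x⁻¹ * Real.exp (-1 / x - c * x / t))
      = ∫⁻ u in Ioi (0:ℝ), ENNReal.ofReal (u⁻¹ * Real.exp (-c / u - u / t)) := by
    have hscale := lintegral_scale (fun u => ENNReal.ofReal (u⁻¹ * Real.exp (-c / u - u / t)))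
      (by fun_prop) hc (measurableSet_Ioi (a := (0:ℝ)))
    rw [Set.preimage_const_mul_Ioi₀ _ hc, zero_div] at hscale
    rw [hscale, ← lintegral_const_mul _ (by fun_prop)]
    apply setLIntegral_congr_fun measurableSet_Ioi
    intro x hx
    dsimp only
    rw [← ENNReal.ofReal_mul hc.le]
    congr 1
    have hcx : (c * x) ≠ 0 := (mul_pos hc hx).ne'
    have h1 : -c / (c * x) = -1 / x := by
      rw [neg_div, neg_div, div_mul_cancel_left₀ hc.ne', one_div]
    have h2 : c * ((c*x)⁻¹ * Real.exp (-c / (c * x) - c * x / t))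
        = x⁻¹ * Real.exp (-c / (c * x) - c * x / t) := by
      rw [mul_inv, show c * (c⁻¹ * x⁻¹ * Real.exp (-c / (c * x) - c * x / t))
        = (c * c⁻¹) * (x⁻¹ * Real.exp (-c / (c * x) - c * x / t)) by ring,
        mul_inv_cancel₀ hc.ne', one_mul]
    rw [h2, h1]
  rw [hC, ← ofReal_integral_eq_lintegral_ofReal (integrable_inner c t hc ht) ?_,
    ← ENNReal.ofReal_mul hK]
  filter_upwards [ae_restrict_mem measurableSet_Ioi] with x hx
  have hx0 : 0 < x := hx
  positivity


/-- the CDF of `c·ϑ·ϑ'`, for `ϑ, ϑ'` independent `Inv-Ga(a, 1)` variables,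
is given by integrating the density
`θ ↦ (c^a/Γ(a)²) θ^{-a-1} ∫_0^∞ x⁻¹ e^{-c/x - x/θ} dx` over `(0, θ]`. -/
theorem invGamma_product_scaled_density
    {Ω : Type*} [MeasureSpace Ω] [IsProbabilityMeasure (ℙ : Measure Ω)]
    (a c : ℝ) (ha : 0 < a) (hc : 0 < c)
    (ϑ ϑ' : Ω → ℝ) (hmeas : Measurable ϑ) (hmeas' : Measurable ϑ')
    (hindep : IndepFun ϑ ϑ' ℙ)
    (hlaw : Measure.map ϑ ℙ = invGammaMeasure a 1)
    (hlaw' : Measure.map ϑ' ℙ = invGammaMeasure a 1) :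
    ∀ θ : ℝ, 0 < θ →
      (ℙ {ω | c * ϑ ω * ϑ' ω ≤ θ}).toReal =
        ∫ t in Set.Ioc (0 : ℝ) θ,
          c ^ a / Real.Gamma a ^ 2 * t ^ (-a - 1) *
            ∫ x in Set.Ioi (0 : ℝ), x⁻¹ * Real.exp (-c / x - x / t) := by
  intro θ hθ
  have hΓ : 0 < Real.Gamma a := Real.Gamma_pos_of_pos ha
  have hf_meas : Measurable (invGammaPDF a 1) := invGammaPDF_measurable a
  have hf_meas' : Measurable (fun x => ENNReal.ofReal (invGammaPDF a 1 x)) :=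
    hf_meas.ennreal_ofReal
  have hSFin : SFinite (invGammaMeasure a 1) := by
    unfold invGammaMeasure; infer_instance
  have hS : MeasurableSet {p : ℝ × ℝ | c * p.1 * p.2 ≤ θ} :=
    measurableSet_le (by fun_prop) measurable_const
  -- step 1 : independence
  have hprod : Measure.map (fun ω => (ϑ ω, ϑ' ω)) ℙ
      = (invGammaMeasure a 1).prod (invGammaMeasure a 1) := by
    have h := (indepFun_iff_map_prod_eq_prod_map_map hmeas.aemeasurable
      hmeas'.aemeasurable).mp hindep
    rwa [hlaw, hlaw'] at h
  -- step 2
  have h2 : ℙ {ω | c * ϑ ω * ϑ' ω ≤ θ}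
      = ((invGammaMeasure a 1).prod (invGammaMeasure a 1)) {p : ℝ × ℝ | c * p.1 * p.2 ≤ θ} := by
    rw [← hprod, Measure.map_apply (hmeas.prodMk hmeas') hS]
    rfl
  -- step 3 : iterate
  have hF_meas : Measurable (fun x => invGammaMeasure a 1 {y | c * x * y ≤ θ}) := by
    have : (fun x => invGammaMeasure a 1 {y | c * x * y ≤ θ})
        = fun x => invGammaMeasure a 1 (Prod.mk x ⁻¹' {p : ℝ × ℝ | c * p.1 * p.2 ≤ θ}) := rfl
    rw [this]
    exact measurable_measure_prodMk_left hS
  have h3 : ((invGammaMeasure a 1).prod (invGammaMeasure a 1)) {p : ℝ × ℝ | c * p.1 * p.2 ≤ θ}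
      = ∫⁻ x, ENNReal.ofReal (invGammaPDF a 1 x) * invGammaMeasure a 1 {y | c * x * y ≤ θ} := by
    rw [Measure.prod_apply hS]
    calc ∫⁻ x, invGammaMeasure a 1 (Prod.mk x ⁻¹' {p : ℝ × ℝ | c * p.1 * p.2 ≤ θ})
          ∂(invGammaMeasure a 1)
        = ∫⁻ x, (fun x => invGammaMeasure a 1 {y | c * x * y ≤ θ}) x
          ∂(volume.withDensity (fun x => ENNReal.ofReal (invGammaPDF a 1 x))) := rfl
      _ = ∫⁻ x, ((fun x => ENNReal.ofReal (invGammaPDF a 1 x)) *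
            (fun x => invGammaMeasure a 1 {y | c * x * y ≤ θ})) x ∂volume :=
          lintegral_withDensity_eq_lintegral_mul volume hf_meas' hF_meas
      _ = ∫⁻ x, ENNReal.ofReal (invGammaPDF a 1 x) * invGammaMeasure a 1 {y | c * x * y ≤ θ} := rfl
  -- step 5 : restrict to Ioi 0
  have h5 : ∫⁻ x, ENNReal.ofReal (invGammaPDF a 1 x) * invGammaMeasure a 1 {y | c * x * y ≤ θ}
      = ∫⁻ x in Ioi (0:ℝ),
          ENNReal.ofReal (invGammaPDF a 1 x) * invGammaMeasure a 1 {y | c * x * y ≤ θ} := by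
    rw [← lintegral_indicator measurableSet_Ioi]
    apply lintegral_congr
    intro x
    by_cases hx : x ∈ Ioi (0:ℝ)
    · rw [Set.indicator_of_mem hx]
    · rw [Set.indicator_of_notMem hx, invGammaPDF_of_nonpos a 1 (by simpa using hx),
        ENNReal.ofReal_zero, zero_mul]
  -- step 6 : inner measure evaluation
  have h6 : ∀ x ∈ Ioi (0:ℝ), invGammaMeasure a 1 {y | c * x * y ≤ θ}
      = ENNReal.ofReal ((c * x)⁻¹) *
        ∫⁻ t in Ioc (0:ℝ) θ, ENNReal.ofReal (invGammaPDF a 1 ((c * x)⁻¹ * t)) := by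
    intro x hx
    have hx0 : 0 < x := hx
    have hcx : 0 < c * x := mul_pos hc hx0
    have hb : 0 < θ / (c * x) := div_pos hθ hcx
    have hset : {y | c * x * y ≤ θ} = Iic (θ / (c * x)) := by
      ext y
      simp only [mem_setOf_eq, mem_Iic]
      rw [le_div_iff₀ hcx, mul_comm y (c * x), mul_assoc]
    have h61 : invGammaMeasure a 1 (Iic (θ / (c * x)))
        = ∫⁻ y in Iic (θ / (c * x)), ENNReal.ofReal (invGammaPDF a 1 y) := by
      rw [invGammaMeasure, withDensity_apply _ measurableSet_Iic]
    have h62 : ∫⁻ y in Iic (θ / (c * x)), ENNReal.ofReal (invGammaPDF a 1 y)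
        = ∫⁻ y in Ioc (0:ℝ) (θ / (c * x)), ENNReal.ofReal (invGammaPDF a 1 y) := by
      rw [← Set.Iic_union_Ioc_eq_Iic hb.le,
        lintegral_union measurableSet_Ioc (Set.Iic_disjoint_Ioc le_rfl)]
      have hz : ∫⁻ y in Iic (0:ℝ), ENNReal.ofReal (invGammaPDF a 1 y) = 0 := by
        have : ∫⁻ y in Iic (0:ℝ), ENNReal.ofReal (invGammaPDF a 1 y)
            = ∫⁻ _ in Iic (0:ℝ), (0:ℝ≥0∞) := by
          apply setLIntegral_congr_fun measurableSet_Iic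
          intro y hy
          dsimp only
          rw [invGammaPDF_of_nonpos a 1 (by simp at hy ⊢; linarith), ENNReal.ofReal_zero]
        rw [this, lintegral_zero]
      rw [hz, zero_add]
    have h63 := lintegral_scale (fun y => ENNReal.ofReal (invGammaPDF a 1 y)) hf_meas'
      (inv_pos.mpr hcx) (measurableSet_Ioc (a := (0:ℝ)) (b := θ / (c * x)))
    rw [Set.preimage_const_mul_Ioc₀ _ _ (inv_pos.mpr hcx), zero_div, div_inv_eq_mul,
      div_mul_cancel₀ θ hcx.ne'] at h63
    rw [hset, h61, h62, h63]
  have h6' : ∫⁻ x in Ioi (0:ℝ),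
        ENNReal.ofReal (invGammaPDF a 1 x) * invGammaMeasure a 1 {y | c * x * y ≤ θ}
      = ∫⁻ x in Ioi (0:ℝ), ENNReal.ofReal (invGammaPDF a 1 x) * (ENNReal.ofReal ((c * x)⁻¹) *
          ∫⁻ t in Ioc (0:ℝ) θ, ENNReal.ofReal (invGammaPDF a 1 ((c * x)⁻¹ * t))) := by
    apply setLIntegral_congr_fun measurableSet_Ioi
    intro x hx
    dsimp only
    rw [h6 x hx]
  -- step 7 : double integral and swap
  have hjm : Measurable (fun p : ℝ × ℝ => ENNReal.ofReal (invGammaPDF a 1 p.1) *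
      ENNReal.ofReal ((c * p.1)⁻¹) * ENNReal.ofReal (invGammaPDF a 1 ((c * p.1)⁻¹ * p.2))) := by
    refine (((hf_meas.comp measurable_fst).ennreal_ofReal.mul
      ((measurable_fst.const_mul c).inv.ennreal_ofReal)).mul
      ((hf_meas.comp (((measurable_fst.const_mul c).inv).mul measurable_snd)).ennreal_ofReal))
  have h7 : ∫⁻ x in Ioi (0:ℝ), ENNReal.ofReal (invGammaPDF a 1 x) * (ENNReal.ofReal ((c * x)⁻¹) *
        ∫⁻ t in Ioc (0:ℝ) θ, ENNReal.ofReal (invGammaPDF a 1 ((c * x)⁻¹ * t)))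
      = ∫⁻ t in Ioc (0:ℝ) θ, ∫⁻ x in Ioi (0:ℝ),
          ENNReal.ofReal (invGammaPDF a 1 x) * ENNReal.ofReal ((c * x)⁻¹) *
            ENNReal.ofReal (invGammaPDF a 1 ((c * x)⁻¹ * t)) := by
    have hstep : ∫⁻ x in Ioi (0:ℝ), ENNReal.ofReal (invGammaPDF a 1 x) *
          (ENNReal.ofReal ((c * x)⁻¹) *
            ∫⁻ t in Ioc (0:ℝ) θ, ENNReal.ofReal (invGammaPDF a 1 ((c * x)⁻¹ * t)))
        = ∫⁻ x in Ioi (0:ℝ), ∫⁻ t in Ioc (0:ℝ) θ,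
            ENNReal.ofReal (invGammaPDF a 1 x) * ENNReal.ofReal ((c * x)⁻¹) *
              ENNReal.ofReal (invGammaPDF a 1 ((c * x)⁻¹ * t)) := by
      apply lintegral_congr
      intro x
      have hg : Measurable (fun t : ℝ => ENNReal.ofReal (invGammaPDF a 1 ((c * x)⁻¹ * t))) :=
        (hf_meas.comp (measurable_const_mul ((c * x)⁻¹))).ennreal_ofReal
      rw [← mul_assoc, ← lintegral_const_mul _ hg]
    rw [hstep]
    exact lintegral_lintegral_swap hjm.aemeasurable
  -- step 8 : evaluate the inner integral
  have h8 : ∫⁻ t in Ioc (0:ℝ) θ, ∫⁻ x in Ioi (0:ℝ),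
        ENNReal.ofReal (invGammaPDF a 1 x) * ENNReal.ofReal ((c * x)⁻¹) *
          ENNReal.ofReal (invGammaPDF a 1 ((c * x)⁻¹ * t))
      = ∫⁻ t in Ioc (0:ℝ) θ, ENNReal.ofReal (c ^ a / Real.Gamma a ^ 2 * t ^ (-a - 1) *
          ∫ x in Ioi (0:ℝ), x⁻¹ * Real.exp (-c / x - x / t)) := by
    apply setLIntegral_congr_fun measurableSet_Ioc
    intro t ht
    exact inner_eval a c t hc ht.1 hΓ
  -- final conversion
  have hsm : AEStronglyMeasurable (fun t => c ^ a / Real.Gamma a ^ 2 * t ^ (-a - 1) *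
      ∫ x in Ioi (0:ℝ), x⁻¹ * Real.exp (-c / x - x / t)) (volume.restrict (Ioc (0:ℝ) θ)) := by
    apply Measurable.aestronglyMeasurable
    apply Measurable.mul
    · exact ((by fun_prop : Measurable (fun t : ℝ => t ^ (-a-1))).const_mul _)
    · have hjoint : StronglyMeasurable (fun p : ℝ × ℝ => p.2⁻¹ * Real.exp (-c / p.2 - p.2 / p.1)) :=
        (by fun_prop : Measurable _).stronglyMeasurable
      exact (hjoint.integral_prod_right').measurable
  have hnn : 0 ≤ᵐ[volume.restrict (Ioc (0:ℝ) θ)] fun t =>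
      c ^ a / Real.Gamma a ^ 2 * t ^ (-a - 1) *
        ∫ x in Ioi (0:ℝ), x⁻¹ * Real.exp (-c / x - x / t) := by
    filter_upwards [ae_restrict_mem measurableSet_Ioc] with t ht
    have h1 : (0:ℝ) ≤ c ^ a := Real.rpow_nonneg hc.le a
    have h2 : (0:ℝ) ≤ t ^ (-a - 1) := Real.rpow_nonneg ht.1.le _
    have h3 : (0:ℝ) ≤ ∫ x in Ioi (0:ℝ), x⁻¹ * Real.exp (-c / x - x / t) :=
      setIntegral_nonneg measurableSet_Ioi fun x hx =>
        mul_nonneg (inv_nonneg.mpr (le_of_lt hx)) (Real.exp_nonneg _)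
    positivity
  rw [integral_eq_lintegral_of_nonneg_ae hnn hsm, h2, h3, h5, h6', h7, h8]
end
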